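/- For semi-implicit methods, the growth function 𝔥_s defined by 𝔥_s(∅)=0, 𝔥_s([τ₁,…,τ_κ]_l)=1 if l>0, and 𝔥_s([τ₁,…,τ_κ]_0)=1+max_j 𝔥_s(τ_j), satisfies: if 𝔥_s(τ)=k with k ≥ 1, then ρ(τ) ≥ k − 1/2. -/

import Mathlib

inductive CTree (m : ℕ) : Type
  | node : Fin (m + 1) → List (CTree m) → CTree m

namespace CTree

variable {m : ℕ}

def rho : CTree m → ℚ
  | .node l ts => (if (l : ℕ) = 0 then 1 else 1/2) + (ts.attach.map (fun t => rho t.1)).sum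
decreasing_by
  all_goals try simp only [CTree.node.sizeOf_spec, List.cons.sizeOf_spec, List.nil.sizeOf_spec]
  all_goals try have := List.sizeOf_lt_of_mem t.2
  all_goals omega

def height : CTree m → ℕ
  | .node _ ts => 1 + (ts.attach.map (fun t => height t.1)).foldr max 0
decreasing_by
  all_goals try simp only [CTree.node.sizeOf_spec, List.cons.sizeOf_spec, List.nil.sizeOf_spec]
  all_goals try have := List.sizeOf_lt_of_mem t.2
  all_goals omega

def ram : CTree m → ℕ
  | .node _ [] => 1
  | .node _ [t] => ram t
  | .node _ ts => 1 + (ts.attach.map (fun t => ram t.1)).foldr max 0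
decreasing_by
  all_goals try simp only [CTree.node.sizeOf_spec, List.cons.sizeOf_spec, List.nil.sizeOf_spec]
  all_goals try have := List.sizeOf_lt_of_mem t.2
  all_goals omega

def dbl : CTree m → ℕ
  | .node _ [] => 1
  | .node _ ts =>
      let ds := ts.attach.map (fun t => dbl t.1)
      let M := ds.foldr max 0
      if 2 ≤ ds.count M then M + 1 else M
decreasing_by
  all_goals try simp only [CTree.node.sizeOf_spec, List.cons.sizeOf_spec, List.nil.sizeOf_spec]
  all_goals try have := List.sizeOf_lt_of_mem t.2
  all_goals omega


/-- semi-implicit height-type growth function 𝔥ₛ -/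
def hs : CTree m → ℕ
  | .node l ts => if 0 < (l : ℕ) then 1 else 1 + (ts.attach.map (fun t => hs t.1)).foldr max 0
decreasing_by
  all_goals try simp only [CTree.node.sizeOf_spec, List.cons.sizeOf_spec, List.nil.sizeOf_spec]
  all_goals try have := List.sizeOf_lt_of_mem t.2
  all_goals omega

/-- semi-implicit ramification-type growth function 𝔯ₛ -/
def rs : CTree m → ℕ
  | .node _ [] => 1
  | .node l [t] => if 0 < (l : ℕ) then 1 else rs t
  | .node l ts => if 0 < (l : ℕ) then 1 else 1 + (ts.attach.map (fun t => rs t.1)).foldr max 0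
decreasing_by
  all_goals try simp only [CTree.node.sizeOf_spec, List.cons.sizeOf_spec, List.nil.sizeOf_spec]
  all_goals try have := List.sizeOf_lt_of_mem t.2
  all_goals omega

/-- semi-implicit doubling-type growth function 𝔡ₛ -/
def dsm : CTree m → ℕ
  | .node _ [] => 1
  | .node l ts =>
      if 0 < (l : ℕ) then 1 else
      let vals := ts.attach.map (fun t => dsm t.1)
      let M := vals.foldr max 0
      if 2 ≤ vals.count M then M + 1 else M
decreasing_by
  all_goals try simp only [CTree.node.sizeOf_spec, List.cons.sizeOf_spec, List.nil.sizeOf_spec]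
  all_goals try have := List.sizeOf_lt_of_mem t.2
  all_goals omega


lemma rho_half_le (τ : CTree m) : (1:ℚ)/2 ≤ rho τ := by
  obtain ⟨l, ts⟩ := τ
  rw [rho]
  have hsum : (0:ℚ) ≤ (ts.attach.map (fun t => rho t.1)).sum := by
    apply List.sum_nonneg
    intro x hx
    simp only [List.mem_map] at hx
    obtain ⟨t, ht, rfl⟩ := hx
    have := rho_half_le t.1
    linarith
  split <;> linarith
decreasing_by
  all_goals try simp only [CTree.node.sizeOf_spec, List.cons.sizeOf_spec, List.nil.sizeOf_spec]
  all_goals try have := List.sizeOf_lt_of_mem t.2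
  all_goals omega

lemma foldr_max_mem : ∀ (l : List ℕ), l.foldr max 0 = 0 ∨ l.foldr max 0 ∈ l := by
  intro l
  induction l with
  | nil => left; rfl
  | cons x xs ih =>
    right
    simp only [List.foldr_cons]
    rcases ih with h0 | hm
    · rw [h0, max_eq_left (Nat.zero_le x)]
      exact List.mem_cons_self
    · rcases max_choice x (xs.foldr max 0) with h | h <;> rw [h]
      · exact List.mem_cons_self
      · exact List.mem_cons_of_mem _ hm

lemma hs_key (τ : CTree m) : (hs τ : ℚ) - 1/2 ≤ rho τ := by
  obtain ⟨l, ts⟩ := τ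
  rw [hs, rho]
  have hsum : (0:ℚ) ≤ (ts.attach.map (fun t => rho t.1)).sum := by
    apply List.sum_nonneg
    intro x hx
    simp only [List.mem_map] at hx
    obtain ⟨t, ht, rfl⟩ := hx
    have := rho_half_le t.1
    linarith
  split
  · rename_i hl
    rw [if_neg (by omega : ¬ (l:ℕ) = 0)]
    push_cast
    linarith
  · rename_i hl
    rw [if_pos (by omega : (l:ℕ) = 0)]
    rcases foldr_max_mem (ts.attach.map (fun t => hs t.1)) with h0 | hmem
    · rw [h0]
      push_cast
      linarith
    · simp only [List.mem_map] at hmem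
      obtain ⟨t, ht, hf⟩ := hmem
      have hrec := hs_key t.1
      have hle : rho t.1 ≤ (ts.attach.map (fun t => rho t.1)).sum := by
        apply List.single_le_sum
        · intro x hx
          simp only [List.mem_map] at hx
          obtain ⟨u, hu, rfl⟩ := hx
          have := rho_half_le u.1
          linarith
        · exact List.mem_map.mpr ⟨t, ht, rfl⟩
      rw [← hf]
      push_cast
      linarith
decreasing_by
  all_goals try simp only [CTree.node.sizeOf_spec, List.cons.sizeOf_spec, List.nil.sizeOf_spec]
  all_goals try have := List.sizeOf_lt_of_mem t.2
  all_goals omega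

end CTree

open CTree in
theorem stmt9 (m : ℕ) (τ : CTree m) (k : ℕ) (hk : 1 ≤ k) (h : hs τ = k) :
    (k : ℚ) - 1/2 ≤ rho τ := by subst h; exact hs_key τ
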